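/- Let ε > 0 and let Z₁, Z₂ be independent Laplace(0, 1/ε) random variables on a probability space. For all reals a, b ≥ 0, the expected misclassification count of the per-cell noisy majority classifier satisfies E[ b·1{a + Z₁ ≥ b + Z₂} + a·1{a + Z₁ < b + Z₂} ] = min(a, b)·(1 − g_ε(x)) + max(a, b)·g_ε(x), where x = |a − b| and g_ε(x) = (exp(−ε·x)/2)·(1 + ε·x/2). -/

import Mathlib

open MeasureTheory Real Set Filter Topology ProbabilityTheory

noncomputable section

lemma exp_mul_hasDerivAt (k x : ℝ) : HasDerivAt (fun z => exp (k*z)) (k * exp (k*x)) x := by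
  simpa [mul_comm] using ((hasDerivAt_id x).const_mul k).exp

lemma intg_exp_mul {k : ℝ} (hk : k ≠ 0) (u v : ℝ) :
    ∫ z in u..v, exp (k*z) = (exp (k*v) - exp (k*u)) / k := by
  have h : ∀ x ∈ Set.uIcc u v, HasDerivAt (fun z => exp (k*z) / k) (exp (k*x)) x := by
    intro x _
    simpa [mul_div_assoc, mul_div_cancel_left₀ _ hk] using (exp_mul_hasDerivAt k x).div_const k
  rw [intervalIntegral.integral_eq_sub_of_hasDerivAt h
    ((continuous_exp.comp (continuous_const.mul continuous_id)).intervalIntegrable u v)]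
  ring

lemma intgOn_exp_neg_mul {k : ℝ} (hk : 0 < k) (c : ℝ) :
    IntegrableOn (fun z : ℝ => exp (-(k*z))) (Ioi c) := by
  simpa [neg_mul] using exp_neg_integrableOn_Ioi c hk

lemma tendsto_exp_neg_mul {k : ℝ} (hk : 0 < k) :
    Tendsto (fun z : ℝ => exp (-(k*z))) atTop (𝓝 0) := by
  have := tendsto_exp_atBot.comp (tendsto_id.const_mul_atTop_of_neg (neg_neg_iff_pos.2 hk))
  simpa [Function.comp_def, neg_mul] using this

lemma intg_exp_neg_mul_Ioi {k : ℝ} (hk : 0 < k) (c : ℝ) :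
    ∫ z in Ioi c, exp (-(k*z)) = exp (-(k*c)) / k := by
  have hd : ∀ x ∈ Ici c, HasDerivAt (fun z => -exp (-(k*z)) / k) (exp (-(k*x))) x := by
    intro x _
    have := (((hasDerivAt_id x).const_mul (-k)).exp).neg.div_const k
    simp only [neg_mul, id_eq, mul_one] at this
    exact this.congr_deriv (by rw [mul_neg, neg_neg, mul_div_assoc, div_self hk.ne', mul_one])
  have ht : Tendsto (fun z => -exp (-(k*z)) / k) atTop (𝓝 0) := by
    simpa using ((tendsto_exp_neg_mul hk).neg).div_const k
  rw [integral_Ioi_of_hasDerivAt_of_tendsto' hd (intgOn_exp_neg_mul hk c) ht]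
  ring

lemma intgOn_exp_mul_Iic {k : ℝ} (hk : 0 < k) (c : ℝ) :
    IntegrableOn (fun z : ℝ => exp (k*z)) (Iic c) := by
  have := ((MeasurePreserving.integrableOn_comp_preimage
      (Measure.measurePreserving_neg (volume : Measure ℝ))
      (Homeomorph.neg ℝ).measurableEmbedding).2 (intgOn_exp_neg_mul hk (-c)))
  simp only [neg_preimage, neg_Ioi, neg_neg] at this
  have h2 : IntegrableOn (fun z : ℝ => exp (k*z)) (Iio c) :=
    this.congr_fun (fun x _ => by simp [neg_mul, Function.comp]) measurableSet_Iio
  rwa [integrableOn_Iic_iff_integrableOn_Iio]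

lemma intg_exp_mul_Iic {k : ℝ} (hk : 0 < k) (c : ℝ) :
    ∫ z in Iic c, exp (k*z) = exp (k*c) / k := by
  have h := integral_comp_neg_Iic c (fun x : ℝ => exp (-(k*x)))
  rw [intg_exp_neg_mul_Ioi hk (-c)] at h
  simp only [mul_neg, neg_neg] at h
  exact h

noncomputable def lapd (ε z : ℝ) : ℝ := ε / 2 * exp (-ε * |z|)
noncomputable def lapΦ (ε u : ℝ) : ℝ := if u ≤ 0 then exp (ε*u)/2 else 1 - exp (-(ε*u))/2

lemma lapd_nonneg {ε : ℝ} (hε : 0 < ε) (z : ℝ) : 0 ≤ lapd ε z :=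
  mul_nonneg (by positivity) (exp_pos _).le

lemma lapd_even (ε z : ℝ) : lapd ε (-z) = lapd ε z := by simp [lapd]

lemma lapd_continuous (ε : ℝ) : Continuous (lapd ε) :=
  continuous_const.mul (continuous_exp.comp (continuous_const.mul continuous_abs))

lemma lapd_eq_left {ε z : ℝ} (hz : z ≤ 0) : lapd ε z = ε/2 * exp (ε * z) := by
  rw [lapd, abs_of_nonpos hz]; ring_nf

lemma lapd_eq_right {ε z : ℝ} (hz : 0 ≤ z) : lapd ε z = ε/2 * exp (-(ε * z)) := by
  rw [lapd, abs_of_nonneg hz]; ring_nf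

lemma intgOn_lapd_Iic {ε : ℝ} (hε : 0 < ε) (c : ℝ) : IntegrableOn (lapd ε) (Iic c) := by
  rcases le_or_gt c 0 with h | h
  · exact IntegrableOn.congr_fun ((intgOn_exp_mul_Iic hε c).const_mul (ε/2))
      (fun z hz => (lapd_eq_left (le_trans hz h)).symm) measurableSet_Iic
  · have h1 : IntegrableOn (lapd ε) (Iic 0) :=
      IntegrableOn.congr_fun ((intgOn_exp_mul_Iic hε 0).const_mul (ε/2))
        (fun z hz => (lapd_eq_left hz).symm) measurableSet_Iic
    have h2 : IntegrableOn (lapd ε) (Ioc 0 c) :=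
      ((lapd_continuous ε).continuousOn.integrableOn_Icc (a := 0) (b := c)).mono_set Ioc_subset_Icc_self
    have := h1.union h2
    rwa [Iic_union_Ioc_eq_Iic h.le] at this

lemma intgOn_lapd_Ioi {ε : ℝ} (hε : 0 < ε) (c : ℝ) : IntegrableOn (lapd ε) (Ioi c) := by
  rcases le_or_gt 0 c with h | h
  · exact IntegrableOn.congr_fun ((intgOn_exp_neg_mul hε c).const_mul (ε/2))
      (fun z hz => (lapd_eq_right (le_trans h (le_of_lt hz))).symm) measurableSet_Ioi
  · have h1 : IntegrableOn (lapd ε) (Ioi 0) :=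
      IntegrableOn.congr_fun ((intgOn_exp_neg_mul hε 0).const_mul (ε/2))
        (fun z hz => (lapd_eq_right (le_of_lt hz)).symm) measurableSet_Ioi
    have h2 : IntegrableOn (lapd ε) (Ioc c 0) :=
      ((lapd_continuous ε).continuousOn.integrableOn_Icc (a := c) (b := 0)).mono_set Ioc_subset_Icc_self
    have := h2.union h1
    rwa [Ioc_union_Ioi_eq_Ioi h.le] at this

lemma integrable_lapd {ε : ℝ} (hε : 0 < ε) : Integrable (lapd ε) := by
  rw [← integrableOn_univ, ← Iic_union_Ioi (a := (0:ℝ))]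
  exact (intgOn_lapd_Iic hε 0).union (intgOn_lapd_Ioi hε 0)

lemma intg_lapd_Iic {ε : ℝ} (hε : 0 < ε) (u : ℝ) :
    ∫ z in Iic u, lapd ε z = lapΦ ε u := by
  rcases le_or_gt u 0 with h | h
  · rw [setIntegral_congr_fun measurableSet_Iic (fun z hz => lapd_eq_left (le_trans hz h)),
      integral_const_mul, intg_exp_mul_Iic hε u, lapΦ, if_pos h]
    field_simp
  · have key0 : ∫ z in Iic (0:ℝ), lapd ε z = 1/2 := by
      rw [setIntegral_congr_fun measurableSet_Iic (fun z hz => lapd_eq_left hz),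
        integral_const_mul, intg_exp_mul_Iic hε 0]
      field_simp
      simp
    have key2 : ∫ z in Ioc (0:ℝ) u, lapd ε z = (1 - exp (-(ε*u)))/2 := by
      rw [setIntegral_congr_fun measurableSet_Ioc (fun z hz => lapd_eq_right hz.1.le),
        ← intervalIntegral.integral_of_le h.le]
      have : ∀ z ∈ Set.uIcc 0 u, ε/2 * exp (-(ε*z)) = ε/2 * exp ((-ε)*z) := by
        intro z _; ring_nf
      rw [intervalIntegral.integral_congr this, intervalIntegral.integral_const_mul,
        intg_exp_mul (by linarith : (-ε : ℝ) ≠ 0)]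
      field_simp
      ring_nf
      rw [exp_zero]; ring
    have hsplit : ∫ z in Iic u, lapd ε z
        = (∫ z in Iic (0:ℝ), lapd ε z) + ∫ z in Ioc (0:ℝ) u, lapd ε z := by
      rw [← setIntegral_union (Iic_disjoint_Ioc le_rfl) measurableSet_Ioc
        (intgOn_lapd_Iic hε 0) ((intgOn_lapd_Iic hε u).mono_set Ioc_subset_Iic_self),
        Iic_union_Ioc_eq_Iic h.le]
    rw [hsplit, key0, key2, lapΦ, if_neg (not_le.2 h)]
    ring

lemma integral_lapd {ε : ℝ} (hε : 0 < ε) : ∫ z, lapd ε z = 1 := by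
  have key1 : ∫ z in Ioi (0:ℝ), lapd ε z = 1/2 := by
    rw [setIntegral_congr_fun measurableSet_Ioi (fun z hz => lapd_eq_right (le_of_lt hz)),
      integral_const_mul, intg_exp_neg_mul_Ioi hε 0]
    field_simp
    simp
  have := intg_lapd_Iic hε 0
  rw [← setIntegral_univ, ← Iic_union_Ioi (a := (0:ℝ)),
    setIntegral_union (Iic_disjoint_Ioi le_rfl) measurableSet_Ioi
      (intgOn_lapd_Iic hε 0) (intgOn_lapd_Ioi hε 0), this, key1, lapΦ]
  norm_num

lemma lapΦ_nonneg {ε : ℝ} (hε : 0 < ε) (u : ℝ) : 0 ≤ lapΦ ε u := by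
  rw [lapΦ]; split
  · positivity
  · have : exp (-(ε*u)) ≤ 1 := exp_le_one_iff.2 (by nlinarith [not_le.1 ‹¬ u ≤ 0›])
    linarith

lemma lapΦ_le_one {ε : ℝ} (hε : 0 < ε) (u : ℝ) : lapΦ ε u ≤ 1 := by
  rw [lapΦ]; split
  · have : exp (ε*u) ≤ 1 := exp_le_one_iff.2 (by nlinarith [‹u ≤ 0›])
    linarith
  · nlinarith [exp_pos (-(ε*u))]

lemma lapΦ_add_neg {ε : ℝ} (u : ℝ) : lapΦ ε u + lapΦ ε (-u) = 1 := by
  rcases lt_trichotomy u 0 with h | h | h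
  · rw [lapΦ, lapΦ, if_pos h.le, if_neg (by linarith)]; ring_nf
  · subst h; simp [lapΦ]; norm_num
  · rw [lapΦ, lapΦ, if_neg (not_le.2 h), if_pos (by linarith)]; ring_nf

lemma lapΦ_measurable (ε : ℝ) : Measurable (lapΦ ε) := by
  unfold lapΦ
  exact Measurable.ite (measurableSet_le measurable_id measurable_const)
    (by fun_prop) (by fun_prop)

lemma intg_I {ε : ℝ} (hε : 0 < ε) (t : ℝ) :
    Integrable (fun z => lapΦ ε (t+z) * lapd ε z) := by
  refine (integrable_lapd hε).mono' ?_ ?_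
  · exact (((lapΦ_measurable ε).comp (measurable_const.add measurable_id)).mul
      (lapd_continuous ε).measurable).aestronglyMeasurable
  · filter_upwards with z
    rw [Real.norm_eq_abs, abs_mul, abs_of_nonneg (lapΦ_nonneg hε _),
      abs_of_nonneg (lapd_nonneg hε _)]
    nlinarith [lapΦ_le_one hε (t+z), lapΦ_nonneg hε (t+z), lapd_nonneg hε z]

lemma I_pos {ε : ℝ} (hε : 0 < ε) {s : ℝ} (hs : 0 ≤ s) :
    ∫ z, lapΦ ε (s+z) * lapd ε z = 1 - exp (-(ε*s))/2 * (1 + ε*s/2) := by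
  set h : ℝ → ℝ := fun z => lapΦ ε (s+z) * lapd ε z with hh
  have hint := intg_I hε s
  have P1 : ∫ z in Iic (-s), h z = exp (-(ε*s))/8 := by
    have congr1 : ∀ z ∈ Iic (-s), h z = (ε/4 * exp (-(ε*s))) * exp ((2*ε)*z + (2*ε)*s) := by
      intro z hz
      simp only [mem_Iic] at hz
      rw [hh]
      simp only
      rw [lapΦ, if_pos (by linarith : s + z ≤ 0), lapd_eq_left (by linarith : z ≤ 0)]
      rw [show ε*(s+z) = ε*s + ε*z by ring,
        show (2*ε)*z + (2*ε)*s = (ε*z + ε*z) + (ε*s + ε*s) by ring]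
      simp only [exp_add, exp_neg]
      field_simp
      ring
    rw [setIntegral_congr_fun measurableSet_Iic congr1]
    have : ∀ z : ℝ, exp ((2*ε)*z + (2*ε)*s) = exp ((2*ε)*s) * exp ((2*ε)*z) := by
      intro z; rw [← exp_add]; ring_nf
    simp_rw [this]
    rw [integral_const_mul, integral_const_mul, intg_exp_mul_Iic (by linarith : (0:ℝ) < 2*ε)]
    rw [show (2*ε)*(-s) = -(ε*s + ε*s) by ring, show (2*ε)*s = ε*s + ε*s by ring]
    simp only [exp_add, exp_neg]
    field_simp
    ring
  have P2 : ∫ z in Ioc (-s) 0, h z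
      = (1 - exp (-(ε*s)))/2 - ε/4 * exp (-(ε*s)) * s := by
    have congr2 : ∀ z ∈ Ioc (-s) 0, h z = ε/2 * exp (ε*z) - ε/4 * exp (-(ε*s)) := by
      intro z hz
      simp only [mem_Ioc] at hz
      rw [hh]; simp only
      rw [lapΦ, if_neg (by push_neg; linarith [hz.1] : ¬ s + z ≤ 0), lapd_eq_left hz.2]
      rw [show -(ε*(s+z)) = -(ε*s + ε*z) by ring]
      simp only [exp_add, exp_neg]
      field_simp
      ring
    rw [setIntegral_congr_fun measurableSet_Ioc congr2,
      ← intervalIntegral.integral_of_le (by linarith : -s ≤ (0:ℝ))]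
    rw [intervalIntegral.integral_sub
      (Continuous.intervalIntegrable (by fun_prop) _ _)
      intervalIntegrable_const]
    rw [intervalIntegral.integral_const_mul, intg_exp_mul hε.ne', intervalIntegral.integral_const]
    rw [show ε*(-s) = -(ε*s) by ring]
    simp only [exp_neg, mul_zero, exp_zero]
    field_simp
    ring_nf
    rw [mul_inv_cancel_right₀ (exp_pos (ε*s)).ne']
  have P3 : ∫ z in Ioi 0, h z = 1/2 - exp (-(ε*s))/8 := by
    have congr3 : ∀ z ∈ Ioi (0:ℝ), h z
        = ε/2 * exp (-(ε*z)) - (ε/4 * exp (-(ε*s))) * exp (-((2*ε)*z)) := by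
      intro z hz
      simp only [mem_Ioi] at hz
      rw [hh]; simp only
      rw [lapΦ, if_neg (by push_neg; linarith : ¬ s + z ≤ 0), lapd_eq_right hz.le]
      rw [show -(ε*(s+z)) = -(ε*s) + -(ε*z) by ring, exp_add,
        show -((2*ε)*z) = -(ε*z) + -(ε*z) by ring, exp_add]
      ring
    rw [setIntegral_congr_fun measurableSet_Ioi congr3]
    rw [integral_sub ((intgOn_exp_neg_mul hε 0).const_mul _)
      ((intgOn_exp_neg_mul (by linarith : (0:ℝ) < 2*ε) 0).const_mul _)]
    rw [integral_const_mul, integral_const_mul, intg_exp_neg_mul_Ioi hε, intg_exp_neg_mul_Ioi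
      (by linarith : (0:ℝ) < 2*ε)]
    simp only [mul_zero, neg_zero, exp_zero]
    field_simp
    ring
  have split1 : ∫ z in Iic 0, h z = (∫ z in Iic (-s), h z) + ∫ z in Ioc (-s) 0, h z := by
    rw [← setIntegral_union (Iic_disjoint_Ioc le_rfl) measurableSet_Ioc
      (hint.integrableOn) (hint.integrableOn), Iic_union_Ioc_eq_Iic (by linarith : -s ≤ (0:ℝ))]
  have split2 : ∫ z, h z = (∫ z in Iic 0, h z) + ∫ z in Ioi 0, h z := by
    rw [← setIntegral_univ, ← Iic_union_Ioi (a := (0:ℝ)),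
      setIntegral_union (Iic_disjoint_Ioi le_rfl) measurableSet_Ioi
        hint.integrableOn hint.integrableOn]
  rw [split2, split1, P1, P2, P3]
  ring

lemma I_reflect {ε : ℝ} (hε : 0 < ε) (t : ℝ) :
    ∫ z, lapΦ ε (t+z) * lapd ε z = 1 - ∫ z, lapΦ ε (-t+z) * lapd ε z := by
  have key : ∀ z : ℝ, lapΦ ε (t + -z) * lapd ε (-z)
      = lapd ε z - lapΦ ε (-t+z) * lapd ε z := by
    intro z
    have h1 := lapΦ_add_neg (ε := ε) (t - z)
    rw [lapd_even]
    have : lapΦ ε (t + -z) = 1 - lapΦ ε (-t+z) := by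
      rw [show t + -z = t - z by ring, show -t+z = -(t-z) by ring]; linarith
    rw [this]; ring
  calc ∫ z, lapΦ ε (t+z) * lapd ε z = ∫ z, lapΦ ε (t + -z) * lapd ε (-z) := by
        rw [integral_neg_eq_self (fun z => lapΦ ε (t + z) * lapd ε z) volume]
      _ = ∫ z, (lapd ε z - lapΦ ε (-t+z) * lapd ε z) := by simp_rw [key]
      _ = 1 - ∫ z, lapΦ ε (-t+z) * lapd ε z := by
        rw [integral_sub (integrable_lapd hε) (intg_I hε (-t)), integral_lapd hε]

theorem expected_cell_misclassification {Ω : Type*} [MeasurableSpace Ω]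
    (P : Measure Ω) [IsProbabilityMeasure P]
    (ε : ℝ) (hε : 0 < ε) (Z₁ Z₂ : Ω → ℝ)
    (hZ₁ : Measurable Z₁) (hZ₂ : Measurable Z₂)
    (hindep : IndepFun Z₁ Z₂ P)
    (hlaw₁ : Measure.map Z₁ P =
      volume.withDensity (fun z => ENNReal.ofReal (ε / 2 * Real.exp (-ε * |z|))))
    (hlaw₂ : Measure.map Z₂ P =
      volume.withDensity (fun z => ENNReal.ofReal (ε / 2 * Real.exp (-ε * |z|))))
    (a b : ℝ) (ha : 0 ≤ a) (hb : 0 ≤ b) :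
    ∫ ω, (b * (if a + Z₁ ω ≥ b + Z₂ ω then (1 : ℝ) else 0)
        + a * (if a + Z₁ ω < b + Z₂ ω then (1 : ℝ) else 0)) ∂P =
      min a b * (1 - Real.exp (-ε * |a - b|) / 2 * (1 + ε * |a - b| / 2))
        + max a b * (Real.exp (-ε * |a - b|) / 2 * (1 + ε * |a - b| / 2)) := by
  set t := a - b with ht
  set μ : Measure ℝ := volume.withDensity (fun z => ENNReal.ofReal (lapd ε z)) with hμ
  have hlaw₁' : Measure.map Z₁ P = μ := hlaw₁
  have hlaw₂' : Measure.map Z₂ P = μ := hlaw₂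
  have hw : Measurable (fun z => ENNReal.ofReal (lapd ε z)) :=
    (lapd_continuous ε).measurable.ennreal_ofReal
  -- the set and event
  set S : Set (ℝ × ℝ) := {p : ℝ × ℝ | b + p.2 ≤ a + p.1} with hSdef
  have hS : MeasurableSet S :=
    measurableSet_le (measurable_const.add measurable_snd) (measurable_const.add measurable_fst)
  set E : Set Ω := {ω | b + Z₂ ω ≤ a + Z₁ ω} with hEdef
  have hE : MeasurableSet E :=
    measurableSet_le (measurable_const.add hZ₂) (measurable_const.add hZ₁)
  set I : ℝ := ∫ z, lapΦ ε (t+z) * lapd ε z with hIdef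
  have hI0 : 0 ≤ I := integral_nonneg fun z =>
    mul_nonneg (lapΦ_nonneg hε _) (lapd_nonneg hε _)
  -- compute P E
  have hpair : Measure.map (fun ω => (Z₁ ω, Z₂ ω)) P = μ.prod μ := by
    rw [(indepFun_iff_map_prod_eq_prod_map_map hZ₁.aemeasurable hZ₂.aemeasurable).mp hindep,
      hlaw₁', hlaw₂']
  have hCDF : ∀ u : ℝ, μ (Iic u) = ENNReal.ofReal (lapΦ ε u) := by
    intro u
    rw [hμ, withDensity_apply _ measurableSet_Iic,
      ← ofReal_integral_eq_lintegral_ofReal (intgOn_lapd_Iic hε u)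
        (Filter.Eventually.of_forall fun z => lapd_nonneg hε z),
      intg_lapd_Iic hε u]
  have hPE : P E = ENNReal.ofReal I := by
    have h1 : E = (fun ω => (Z₁ ω, Z₂ ω)) ⁻¹' S := rfl
    rw [h1, ← Measure.map_apply (hZ₁.prodMk hZ₂) hS, hpair, Measure.prod_apply hS]
    have h2 : ∀ z : ℝ, Prod.mk z ⁻¹' S = Iic (t + z) := by
      intro z; ext y
      simp only [hSdef, mem_preimage, mem_setOf_eq, mem_Iic, ht]
      constructor <;> intro h <;> linarith
    simp_rw [h2, hCDF]
    have hg : Measurable fun z => ENNReal.ofReal (lapΦ ε (t + z)) :=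
      ((lapΦ_measurable ε).comp (measurable_const.add measurable_id)).ennreal_ofReal
    rw [hμ, lintegral_withDensity_eq_lintegral_mul _ hw hg]
    have h3 : ∀ z : ℝ, (ENNReal.ofReal (lapd ε z)) * ENNReal.ofReal (lapΦ ε (t + z))
        = ENNReal.ofReal (lapΦ ε (t+z) * lapd ε z) := by
      intro z
      rw [← ENNReal.ofReal_mul (lapd_nonneg hε z), mul_comm]
    calc ∫⁻ z, ((fun z => ENNReal.ofReal (lapd ε z)) * fun z => ENNReal.ofReal (lapΦ ε (t + z))) z
        = ∫⁻ z, ENNReal.ofReal (lapΦ ε (t+z) * lapd ε z) := by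
          congr 1; funext z; exact h3 z
      _ = ENNReal.ofReal I := by
          rw [hIdef, ofReal_integral_eq_lintegral_ofReal (intg_I hε t)
            (Filter.Eventually.of_forall fun z =>
              mul_nonneg (lapΦ_nonneg hε _) (lapd_nonneg hε _))]
  -- compute the LHS integral
  have hfun : ∀ ω, b * (if a + Z₁ ω ≥ b + Z₂ ω then (1:ℝ) else 0)
      + a * (if a + Z₁ ω < b + Z₂ ω then (1:ℝ) else 0)
      = (b - a) * (E.indicator (fun _ => (1:ℝ)) ω) + a := by
    intro ω
    rcases le_or_gt (b + Z₂ ω) (a + Z₁ ω) with h | h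
    · rw [indicator_of_mem (by exact h) (fun _ => (1:ℝ)), if_pos h, if_neg (not_lt.2 h)]
      ring
    · rw [indicator_of_notMem (by exact not_le.2 h) (fun _ => (1:ℝ)),
        if_neg (not_le.2 h), if_pos h]
      ring
  have hLHS : ∫ ω, (b * (if a + Z₁ ω ≥ b + Z₂ ω then (1:ℝ) else 0)
      + a * (if a + Z₁ ω < b + Z₂ ω then (1:ℝ) else 0)) ∂P = (b - a) * I + a := by
    simp_rw [hfun]
    rw [integral_add (((integrable_const (1:ℝ)).indicator hE).const_mul _) (integrable_const a),
      integral_const_mul, integral_indicator_const (1:ℝ) hE, integral_const, measureReal_def, hPE,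
      ENNReal.toReal_ofReal hI0]
    simp
  rw [hLHS]
  -- final case analysis
  rcases le_total b a with hba | hab
  · have habs : |a - b| = t := abs_of_nonneg (by linarith)
    have hI : I = 1 - exp (-(ε*t))/2 * (1 + ε*t/2) := I_pos hε (by linarith : 0 ≤ t)
    rw [habs, min_eq_right hba, max_eq_left hba, hI, show -ε * t = -(ε*t) by ring]
    ring
  · have habs : |a - b| = -t := abs_of_nonpos (by simp [ht]; linarith)
    have hI : I = exp (-(ε*(-t)))/2 * (1 + ε*(-t)/2) := by
      rw [hIdef, I_reflect hε t, I_pos hε (by linarith : 0 ≤ -t)]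
      ring
    rw [habs, min_eq_left hab, max_eq_right hab, hI, show -ε * -t = -(ε * -t) by ring]
    ring

end
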